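/- Let μ be a probability measure on the unit circle S¹ ⊆ ℝ² invariant under rotation by π/2, let γ : [0,L] → ℝ² be a C¹ curve with ‖γ̇(t)‖ = 1 for all t, and define B = ∫_0^L ∫_0^L ∫_{S¹} ⟨θ, γ̇(t₁)⟩² ⟨θ, γ̇(t₂)⟩² dμ(θ) dt₁ dt₂. Then B ≥ L²/4. -/

import Mathlib

open MeasureTheory Real intervalIntegral

/-- Auxiliary: the squared projection `⟨θ, γ̇(t)⟩²`. -/
def nodalF (dγ : ℝ → ℝ × ℝ) (t : ℝ) (θ : ℝ × ℝ) : ℝ :=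
  (θ.1 * (dγ t).1 + θ.2 * (dγ t).2) ^ 2

/-- Auxiliary: `A θ = ∫₀^L ⟨θ, γ̇(t)⟩² dt` (as an integral over `Ioc 0 L`). -/
noncomputable def nodalA (dγ : ℝ → ℝ × ℝ) (L : ℝ) (θ : ℝ × ℝ) : ℝ :=
  ∫ t, nodalF dγ t θ ∂(volume.restrict (Set.Ioc 0 L))

/-- Second moment of the projection on a unit vector is `1/2`, by invariance under
rotation by `π/2`. -/
theorem nodal_moment_half (μ : Measure (ℝ × ℝ)) [IsProbabilityMeasure μ]
    (hsupp : ∀ᵐ θ ∂μ, θ.1 ^ 2 + θ.2 ^ 2 = 1)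
    (hrot : μ.map (fun θ : ℝ × ℝ => (-θ.2, θ.1)) = μ)
    (v : ℝ × ℝ) (hv : v.1 ^ 2 + v.2 ^ 2 = 1) :
    ∫ θ, (θ.1 * v.1 + θ.2 * v.2) ^ 2 ∂μ = 1 / 2 := by
  have hTae : ∀ᵐ θ ∂μ, θ.1 ^ 2 + θ.2 ^ 2 = 1 := hsupp
  have hR : Measurable (fun θ : ℝ × ℝ => (-θ.2, θ.1)) :=
    (measurable_snd.neg.prodMk measurable_fst)
  have hcont1 : Continuous fun θ : ℝ × ℝ => (θ.1 * v.1 + θ.2 * v.2) ^ 2 := by fun_prop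
  have hcont2 : Continuous fun θ : ℝ × ℝ => (-θ.2 * v.1 + θ.1 * v.2) ^ 2 := by fun_prop
  have hint1 : Integrable (fun θ : ℝ × ℝ => (θ.1 * v.1 + θ.2 * v.2) ^ 2) μ := by
    refine Integrable.mono' (integrable_const 1) hcont1.aestronglyMeasurable ?_
    filter_upwards [hTae] with θ hθ
    rw [Real.norm_eq_abs, abs_of_nonneg (sq_nonneg _)]
    nlinarith [sq_nonneg (θ.1 * v.2 - θ.2 * v.1), hθ, hv]
  have hint2 : Integrable (fun θ : ℝ × ℝ => (-θ.2 * v.1 + θ.1 * v.2) ^ 2) μ := by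
    refine Integrable.mono' (integrable_const 1) hcont2.aestronglyMeasurable ?_
    filter_upwards [hTae] with θ hθ
    rw [Real.norm_eq_abs, abs_of_nonneg (sq_nonneg _)]
    nlinarith [sq_nonneg (θ.2 * v.2 + θ.1 * v.1), hθ, hv]
  have heq : ∫ θ, (θ.1 * v.1 + θ.2 * v.2) ^ 2 ∂μ
      = ∫ θ, (-θ.2 * v.1 + θ.1 * v.2) ^ 2 ∂μ := by
    conv_lhs => rw [← hrot]
    rw [integral_map hR.aemeasurable hcont1.aestronglyMeasurable]
  have hsum : (∫ θ, (θ.1 * v.1 + θ.2 * v.2) ^ 2 ∂μ)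
      + ∫ θ, (-θ.2 * v.1 + θ.1 * v.2) ^ 2 ∂μ = 1 := by
    rw [← integral_add hint1 hint2]
    have : ∫ θ, ((θ.1 * v.1 + θ.2 * v.2) ^ 2 + (-θ.2 * v.1 + θ.1 * v.2) ^ 2) ∂μ
        = ∫ (_ : ℝ × ℝ), (1 : ℝ) ∂μ := by
      refine integral_congr_ae ?_
      filter_upwards [hTae] with θ hθ
      nlinarith [hθ, hv]
    rw [this]; simp
  linarith [heq, hsum]

/-- For a probability measure `μ` on the unit circle invariant under rotation by `π/2` and
a unit-speed `C¹` curve `γ : [0,L] → ℝ²`, the quantity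
`B = ∫₀^L ∫₀^L ∫_{S¹} ⟨θ,γ̇(t₁)⟩²⟨θ,γ̇(t₂)⟩² dμ dt₁ dt₂` satisfies `B ≥ L²/4`. -/
theorem nodal_intersection_B_lower_bound (μ : Measure (ℝ × ℝ)) [IsProbabilityMeasure μ]
    (hsupp : ∀ᵐ θ ∂μ, θ.1 ^ 2 + θ.2 ^ 2 = 1)
    (hrot : μ.map (fun θ : ℝ × ℝ => (-θ.2, θ.1)) = μ)
    (L : ℝ) (hL : 0 ≤ L) (γ dγ : ℝ → ℝ × ℝ)
    (hderiv : ∀ t, HasDerivAt γ (dγ t) t) (hcont : Continuous dγ)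
    (hunit : ∀ t, (dγ t).1 ^ 2 + (dγ t).2 ^ 2 = 1) :
    L ^ 2 / 4 ≤
      ∫ t₁ in (0:ℝ)..L, ∫ t₂ in (0:ℝ)..L,
        ∫ θ, (θ.1 * (dγ t₁).1 + θ.2 * (dγ t₁).2) ^ 2 *
              (θ.1 * (dγ t₂).1 + θ.2 * (dγ t₂).2) ^ 2 ∂μ := by
  set T : Set (ℝ × ℝ) := {θ | θ.1 ^ 2 + θ.2 ^ 2 = 1} with hTdef
  have hTae : ∀ᵐ θ ∂μ, θ ∈ T := hsupp
  set ρ : Measure ℝ := volume.restrict (Set.Ioc 0 L) with hρdef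
  haveI hρfin : IsFiniteMeasure ρ := by
    constructor
    rw [hρdef, Measure.restrict_apply_univ, Real.volume_Ioc]
    exact ENNReal.ofReal_lt_top
  have hρuniv : (ρ Set.univ).toReal = L := by
    rw [hρdef, Measure.restrict_apply_univ, Real.volume_Ioc]
    simp [hL]
  have hFcont : Continuous (Function.uncurry (nodalF dγ)) := by
    unfold Function.uncurry nodalF; fun_prop
  have hFnn : ∀ t θ, 0 ≤ nodalF dγ t θ := fun t θ => sq_nonneg _
  have hFle : ∀ (t : ℝ), ∀ θ ∈ T, nodalF dγ t θ ≤ 1 := by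
    intro t θ hθ
    have hθ' : θ.1 ^ 2 + θ.2 ^ 2 = 1 := hθ
    have hv := hunit t
    unfold nodalF
    nlinarith [sq_nonneg (θ.1 * (dγ t).2 - θ.2 * (dγ t).1)]
  -- a.e. point of the product measure has second coordinate on the circle
  have hnull : μ Tᶜ = 0 := ae_iff.mp hTae
  have hprodae : ∀ᵐ p ∂(ρ.prod μ), p.2 ∈ T := by
    rw [ae_iff]
    have hset : {p : ℝ × (ℝ × ℝ) | ¬ p.2 ∈ T} = Set.univ ×ˢ Tᶜ := by
      ext p; simp
    rw [hset, Measure.prod_prod, hnull, mul_zero]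
  -- integrability on the product from an a.e. bound
  have hintprod : ∀ (G : ℝ × (ℝ × ℝ) → ℝ) (C : ℝ), AEStronglyMeasurable G (ρ.prod μ) →
      (∀ p : ℝ × (ℝ × ℝ), p.2 ∈ T → |G p| ≤ C) → Integrable G (ρ.prod μ) := by
    intro G C hm hb
    refine Integrable.mono' (integrable_const C) hm ?_
    filter_upwards [hprodae] with p hp
    simpa using hb p hp
  -- measurability of A
  have hAsm : StronglyMeasurable (nodalA dγ L) := by
    have : StronglyMeasurable (Function.uncurry (nodalF dγ)) :=
      hFcont.stronglyMeasurable
    exact this.integral_prod_left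
  have hAnn : ∀ θ, 0 ≤ nodalA dγ L θ := fun θ =>
    integral_nonneg fun t => hFnn t θ
  have hAle : ∀ θ ∈ T, nodalA dγ L θ ≤ L := by
    intro θ hθ
    have hi : Integrable (fun t => nodalF dγ t θ) ρ := by
      have hc : Continuous fun t => nodalF dγ t θ := by
        unfold nodalF; fun_prop
      exact (hc.integrableOn_Ioc)
    calc nodalA dγ L θ ≤ ∫ (_ : ℝ), (1 : ℝ) ∂ρ :=
          integral_mono hi (integrable_const 1) (fun t => hFle t θ hθ)
      _ = L := by rw [MeasureTheory.integral_const, smul_eq_mul, mul_one, measureReal_def, hρuniv]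
  -- Fubini: integrability of F on the product
  have hFint : Integrable (Function.uncurry (nodalF dγ)) (ρ.prod μ) := by
    refine hintprod _ 1 hFcont.aestronglyMeasurable ?_
    intro p hp
    rw [Function.uncurry]
    rw [abs_of_nonneg (hFnn _ _)]
    exact hFle _ _ hp
  -- the mean of A is L/2
  have hmom : ∀ t : ℝ, ∫ θ, nodalF dγ t θ ∂μ = 1 / 2 := fun t =>
    nodal_moment_half μ hsupp hrot (dγ t) (hunit t)
  have hAmean : ∫ θ, nodalA dγ L θ ∂μ = L / 2 := by
    calc ∫ θ, nodalA dγ L θ ∂μ = ∫ θ, ∫ t, nodalF dγ t θ ∂ρ ∂μ := rfl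
      _ = ∫ t, ∫ θ, nodalF dγ t θ ∂μ ∂ρ := (integral_integral_swap hFint).symm
      _ = ∫ (_ : ℝ), (1 / 2 : ℝ) ∂ρ :=
          integral_congr_ae (Filter.Eventually.of_forall fun t => hmom t)
      _ = L / 2 := by rw [MeasureTheory.integral_const, smul_eq_mul, measureReal_def, hρuniv]; ring
  -- transform the double integral into ∫ A²
  have key : (∫ t₁ in (0:ℝ)..L, ∫ t₂ in (0:ℝ)..L,
        ∫ θ, (θ.1 * (dγ t₁).1 + θ.2 * (dγ t₁).2) ^ 2 *
              (θ.1 * (dγ t₂).1 + θ.2 * (dγ t₂).2) ^ 2 ∂μ)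
      = ∫ θ, (nodalA dγ L θ) ^ 2 ∂μ := by
    have hgoal : (∫ t₁ in (0:ℝ)..L, ∫ t₂ in (0:ℝ)..L,
        ∫ θ, (θ.1 * (dγ t₁).1 + θ.2 * (dγ t₁).2) ^ 2 *
              (θ.1 * (dγ t₂).1 + θ.2 * (dγ t₂).2) ^ 2 ∂μ)
        = ∫ t₁, ∫ t₂, ∫ θ, nodalF dγ t₁ θ * nodalF dγ t₂ θ ∂μ ∂ρ ∂ρ := by
      rw [intervalIntegral.integral_of_le hL]
      refine integral_congr_ae (Filter.Eventually.of_forall fun t₁ => ?_)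
      exact intervalIntegral.integral_of_le hL
    rw [hgoal]
    have inner_eq : ∀ t₁ : ℝ, (∫ t₂, ∫ θ, nodalF dγ t₁ θ * nodalF dγ t₂ θ ∂μ ∂ρ)
        = ∫ θ, nodalF dγ t₁ θ * nodalA dγ L θ ∂μ := by
      intro t₁
      have hint : Integrable
          (Function.uncurry fun (t₂ : ℝ) (θ : ℝ × ℝ) =>
            nodalF dγ t₁ θ * nodalF dγ t₂ θ) (ρ.prod μ) := by
        refine hintprod _ 1 ?_ ?_
        · have : Continuous fun p : ℝ × (ℝ × ℝ) =>
              nodalF dγ t₁ p.2 * nodalF dγ p.1 p.2 := by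
            unfold nodalF; fun_prop
          exact this.aestronglyMeasurable
        · intro p hp
          rw [Function.uncurry]
          rw [abs_of_nonneg (mul_nonneg (hFnn _ _) (hFnn _ _))]
          calc nodalF dγ t₁ p.2 * nodalF dγ p.1 p.2 ≤ 1 * 1 :=
                mul_le_mul (hFle _ _ hp) (hFle _ _ hp) (hFnn _ _) zero_le_one
            _ = 1 := one_mul 1
      rw [integral_integral_swap hint]
      refine integral_congr_ae (Filter.Eventually.of_forall fun θ => ?_)
      exact integral_const_mul _ _
    have h2 : ∫ t₁, ∫ t₂, ∫ θ, nodalF dγ t₁ θ * nodalF dγ t₂ θ ∂μ ∂ρ ∂ρ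
        = ∫ t₁, ∫ θ, nodalF dγ t₁ θ * nodalA dγ L θ ∂μ ∂ρ :=
      integral_congr_ae (Filter.Eventually.of_forall fun t₁ => inner_eq t₁)
    rw [h2]
    have hint2 : Integrable
        (Function.uncurry fun (t : ℝ) (θ : ℝ × ℝ) =>
          nodalF dγ t θ * nodalA dγ L θ) (ρ.prod μ) := by
      refine hintprod _ L ?_ ?_
      · exact (hFcont.aestronglyMeasurable).mul
          ((hAsm.comp_measurable measurable_snd).aestronglyMeasurable)
      · intro p hp
        rw [Function.uncurry]
        rw [abs_of_nonneg (mul_nonneg (hFnn _ _) (hAnn _))]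
        calc nodalF dγ p.1 p.2 * nodalA dγ L p.2 ≤ 1 * L :=
              mul_le_mul (hFle _ _ hp) (hAle _ hp) (hAnn _) zero_le_one
          _ = L := one_mul L
    rw [integral_integral_swap hint2]
    refine integral_congr_ae (Filter.Eventually.of_forall fun θ => ?_)
    show ∫ t, nodalF dγ t θ * nodalA dγ L θ ∂ρ = nodalA dγ L θ ^ 2
    rw [MeasureTheory.integral_mul_const, sq]
    rfl
  -- integrability of A and A² over μ
  have hAint : Integrable (nodalA dγ L) μ := by
    refine Integrable.mono' (integrable_const L) hAsm.aestronglyMeasurable ?_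
    filter_upwards [hTae] with θ hθ
    rw [Real.norm_eq_abs, abs_of_nonneg (hAnn θ)]
    exact hAle θ hθ
  have hA2int : Integrable (fun θ => (nodalA dγ L θ) ^ 2) μ := by
    refine Integrable.mono' (integrable_const (L ^ 2))
      (hAsm.pow 2).aestronglyMeasurable ?_
    filter_upwards [hTae] with θ hθ
    rw [Real.norm_eq_abs, abs_of_nonneg (sq_nonneg _)]
    exact pow_le_pow_left₀ (hAnn θ) (hAle θ hθ) 2
  -- variance argument
  have hvar : 0 ≤ ∫ θ, (nodalA dγ L θ - L / 2) ^ 2 ∂μ :=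
    integral_nonneg fun θ => sq_nonneg _
  have hexp : ∫ θ, (nodalA dγ L θ - L / 2) ^ 2 ∂μ
      = (∫ θ, (nodalA dγ L θ) ^ 2 ∂μ) - L ^ 2 / 4 := by
    have hptw : ∀ θ, (nodalA dγ L θ - L / 2) ^ 2
        = (nodalA dγ L θ) ^ 2 + ((- L) * nodalA dγ L θ + L ^ 2 / 4) := by
      intro θ; ring
    simp_rw [hptw]
    have hg1 : Integrable (fun θ => -L * nodalA dγ L θ) μ := hAint.const_mul (-L)
    have hg : Integrable (fun θ => -L * nodalA dγ L θ + L ^ 2 / 4) μ :=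
      hg1.add (integrable_const _)
    rw [integral_add hA2int hg, integral_add hg1 (integrable_const _),
      MeasureTheory.integral_const_mul, hAmean, MeasureTheory.integral_const]
    simp [measure_univ]
    ring
  rw [key]
  linarith [hvar, hexp]
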